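/- Let X be a Banach space, D ⊆ X a nonempty open set with nonempty complement, h(x) = dist(x, X\\D), x₀ ∈ D, and let Γ ⊆ D be a curve of finite H^1 measure with x₀ as one endpoint, parametrized by arclength γ : [0,L] → X with γ(0) = x₀, where L = H^1(Γ). Then ∫_Γ (1/h) dH^1 ≥ log(1 + L/h(x₀)). Consequently, if ∫_Γ (1/h) dH^1 ≤ M then L ≤ h(x₀)·e^M and Γ ⊆ B(x₀, h(x₀)e^M). -/

import Mathlib

open MeasureTheory

theorem stmt_17 {X : Type*} [NormedAddCommGroup X] [NormedSpace ℝ X]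
    [MeasurableSpace X] [BorelSpace X]
    (D : Set X) (hD : IsOpen D) (hDc : Dᶜ.Nonempty)
    (x₀ : X) (hx₀ : x₀ ∈ D)
    (L : ℝ) (hL : 0 < L) (γ : ℝ → X) (Γ : Set X)
    (hΓ : Γ = γ '' Set.Icc 0 L) (hΓD : Γ ⊆ D)
    (hlip : LipschitzOnWith 1 γ (Set.Icc 0 L)) (hinj : Set.InjOn γ (Set.Icc 0 L))
    (hγ0 : γ 0 = x₀)
    (harc : ∀ s t : ℝ, 0 ≤ s → s ≤ t → t ≤ L →
      μH[1] (γ '' Set.Icc s t) = ENNReal.ofReal (t - s)) :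
    ENNReal.ofReal (Real.log (1 + L / Metric.infDist x₀ Dᶜ)) ≤
        ∫⁻ z in Γ, ENNReal.ofReal (1 / Metric.infDist z Dᶜ) ∂μH[1] ∧
      ∀ M : ℝ,
        (∫⁻ z in Γ, ENNReal.ofReal (1 / Metric.infDist z Dᶜ) ∂μH[1]) ≤ ENNReal.ofReal M →
        L ≤ Metric.infDist x₀ Dᶜ * Real.exp M ∧
          Γ ⊆ Metric.closedBall x₀ (Metric.infDist x₀ Dᶜ * Real.exp M) := by
  have hDc_closed : IsClosed Dᶜ := hD.isClosed_compl
  have hpos : ∀ z ∈ D, 0 < Metric.infDist z Dᶜ := fun z hz =>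
    (hDc_closed.notMem_iff_infDist_pos hDc).1 (by simpa using hz)
  set h₀ := Metric.infDist x₀ Dᶜ with hh₀def
  have hh₀ : 0 < h₀ := hpos x₀ hx₀
  -- distance bound along the curve
  have hdist : ∀ t ∈ Set.Icc (0:ℝ) L, dist (γ t) x₀ ≤ t := by
    intro t ht
    have := hlip.dist_le_mul t ht 0 (Set.left_mem_Icc.2 hL.le)
    simpa [hγ0, Real.dist_eq, abs_of_nonneg ht.1] using this
  have hbound : ∀ t ∈ Set.Icc (0:ℝ) L, Metric.infDist (γ t) Dᶜ ≤ h₀ + t := by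
    intro t ht
    calc Metric.infDist (γ t) Dᶜ ≤ Metric.infDist x₀ Dᶜ + dist (γ t) x₀ :=
          Metric.infDist_le_infDist_add_dist
      _ ≤ h₀ + t := by
          have := hdist t ht; linarith
  -- the clamped curve
  set c : ℝ → ℝ := fun t => max 0 (min t L) with hc
  have hcmem : ∀ t, c t ∈ Set.Icc (0:ℝ) L := fun t =>
    ⟨le_max_left _ _, max_le (hL.le) (min_le_right _ _)⟩
  set g : ℝ → X := fun t => γ (c t) with hg
  have hgγ : Set.EqOn g γ (Set.Icc 0 L) := by
    intro t ht
    simp only [hg, hc]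
    rw [min_eq_left ht.2, max_eq_right ht.1]
  have hgcont : Continuous g :=
    hlip.continuousOn.comp_continuous
      (continuous_const.max (continuous_id.min continuous_const)) hcmem
  have hgmeas : Measurable g := hgcont.measurable
  have hglip : LipschitzOnWith 1 g (Set.Icc 0 L) := by
    intro x hx y hy
    rw [hgγ hx, hgγ hy]; exact hlip hx hy
  have hΓg : Γ = g '' Set.Icc 0 L := by
    rw [hΓ]; exact (Set.image_congr hgγ).symm
  have hΓlen : μH[1] Γ = ENNReal.ofReal L := by
    rw [hΓ]; simpa using harc 0 L le_rfl hL.le le_rfl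
  have hIccvol : (volume (Set.Icc (0:ℝ) L)) = ENNReal.ofReal L := by
    simp [Real.volume_Icc]
  -- pushforward measure inequality
  set ν : Measure X := Measure.map g (volume.restrict (Set.Icc 0 L)) with hν
  have hνle : ν ≤ μH[1].restrict Γ := by
    rw [Measure.le_iff]
    intro A hA
    rw [hν, Measure.map_apply hgmeas hA,
      Measure.restrict_apply (hgmeas hA),
      Measure.restrict_apply hA]
    set S := g ⁻¹' A ∩ Set.Icc 0 L with hS
    have hSmeas : MeasurableSet S := (hgmeas hA).inter measurableSet_Icc
    have hSsub : S ⊆ Set.Icc (0:ℝ) L := Set.inter_subset_right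
    have himg_sub : g '' S ⊆ A ∩ Γ := by
      rintro _ ⟨t, ht, rfl⟩
      exact ⟨ht.1, hΓg ▸ Set.mem_image_of_mem g ht.2⟩
    refine le_trans ?_ (measure_mono himg_sub)
    -- volume S ≤ μH[1] (g '' S)
    have hcompl : μH[1] (g '' (Set.Icc 0 L \ S)) ≤ volume (Set.Icc 0 L \ S) := by
      have := (hglip.mono (Set.diff_subset (s := Set.Icc 0 L) (t := S))).hausdorffMeasure_image_le
        (d := 1) zero_le_one
      simpa [MeasureTheory.hausdorffMeasure_real] using this
    have hunion : μH[1] Γ ≤ μH[1] (g '' S) + μH[1] (g '' (Set.Icc 0 L \ S)) := by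
      rw [hΓg]
      refine le_trans (measure_mono ?_) (measure_union_le _ _)
      rw [← Set.image_union]
      exact Set.image_mono (f := g) (by rw [Set.union_diff_cancel' (le_refl S) hSsub])
    have hvol_diff : volume (Set.Icc 0 L \ S) = ENNReal.ofReal L - volume S := by
      rw [measure_diff hSsub hSmeas.nullMeasurableSet, hIccvol]
      exact ((measure_mono hSsub).trans_lt (by simp [hIccvol])).ne
    have hvolS_le : volume S ≤ ENNReal.ofReal L := hIccvol ▸ measure_mono hSsub
    have : ENNReal.ofReal L ≤ μH[1] (g '' S) + (ENNReal.ofReal L - volume S) := by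
      calc ENNReal.ofReal L = μH[1] Γ := hΓlen.symm
        _ ≤ μH[1] (g '' S) + μH[1] (g '' (Set.Icc 0 L \ S)) := hunion
        _ ≤ μH[1] (g '' S) + (ENNReal.ofReal L - volume S) := by
            rw [← hvol_diff]; exact add_le_add_right hcompl _
    have := tsub_le_iff_right.2 this
    rwa [ENNReal.sub_sub_cancel (by simp) hvolS_le] at this
  -- the function is measurable
  have hfmeas : Measurable (fun z : X => ENNReal.ofReal (1 / Metric.infDist z Dᶜ)) := by
    exact ENNReal.measurable_ofReal.comp
      ((measurable_const.div (Metric.continuous_infDist_pt Dᶜ).measurable))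
  -- main chain
  have hmain : ENNReal.ofReal (Real.log (1 + L / h₀)) ≤
      ∫⁻ z in Γ, ENNReal.ofReal (1 / Metric.infDist z Dᶜ) ∂μH[1] := by
    have step1 : (∫⁻ t in Set.Icc 0 L, ENNReal.ofReal (1 / (h₀ + t))) ≤
        ∫⁻ t in Set.Icc 0 L, ENNReal.ofReal (1 / Metric.infDist (g t) Dᶜ) := by
      refine setLIntegral_mono (hfmeas.comp hgmeas) ?_
      intro t ht
      apply ENNReal.ofReal_le_ofReal
      have h1 : 0 < Metric.infDist (g t) Dᶜ :=
        hpos _ (hΓD (hΓg ▸ Set.mem_image_of_mem g ht))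
      have h2 : Metric.infDist (g t) Dᶜ ≤ h₀ + t := by
        rw [hgγ ht]; exact hbound t ht
      exact one_div_le_one_div_of_le h1 h2
    have step2 : (∫⁻ t in Set.Icc 0 L, ENNReal.ofReal (1 / Metric.infDist (g t) Dᶜ)) =
        ∫⁻ z, ENNReal.ofReal (1 / Metric.infDist z Dᶜ) ∂ν := by
      rw [hν, lintegral_map hfmeas hgmeas]
    have step3 : (∫⁻ z, ENNReal.ofReal (1 / Metric.infDist z Dᶜ) ∂ν) ≤
        ∫⁻ z in Γ, ENNReal.ofReal (1 / Metric.infDist z Dᶜ) ∂μH[1] :=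
      lintegral_mono' hνle le_rfl
    -- compute the left integral
    have hcont : ContinuousOn (fun t : ℝ => 1 / (h₀ + t)) (Set.Icc 0 L) := by
      apply ContinuousOn.div continuousOn_const (by fun_prop)
      intro t ht
      have h1 := ht.1
      exact ne_of_gt (by linarith)
    have hInt : IntegrableOn (fun t : ℝ => 1 / (h₀ + t)) (Set.Icc 0 L) :=
      hcont.integrableOn_compact isCompact_Icc
    have hval : (∫⁻ t in Set.Icc 0 L, ENNReal.ofReal (1 / (h₀ + t))) =
        ENNReal.ofReal (Real.log (1 + L / h₀)) := by
      rw [← ofReal_integral_eq_lintegral_ofReal hInt]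
      · congr 1
        have : (∫ t in Set.Icc (0:ℝ) L, 1 / (h₀ + t)) = ∫ t in (0:ℝ)..L, 1 / (h₀ + t) := by
          rw [intervalIntegral.integral_of_le hL.le, integral_Icc_eq_integral_Ioc]
        rw [this]
        have := intervalIntegral.integral_comp_add_left (a := (0:ℝ)) (b := L)
          (fun u : ℝ => 1 / u) h₀
        rw [this, add_zero, integral_one_div]
        · congr 1
          rw [add_div, div_self hh₀.ne']
        · rw [Set.uIcc_of_le (by linarith : h₀ ≤ h₀ + L)]
          rintro ⟨h1, h2⟩
          linarith
      · filter_upwards [self_mem_ae_restrict measurableSet_Icc] with t ht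
        have : (0:ℝ) < h₀ + t := by have := ht.1; linarith
        positivity
    calc ENNReal.ofReal (Real.log (1 + L / h₀)) =
        ∫⁻ t in Set.Icc 0 L, ENNReal.ofReal (1 / (h₀ + t)) := hval.symm
      _ ≤ _ := step1
      _ = _ := step2
      _ ≤ _ := step3
  refine ⟨hmain, ?_⟩
  intro M hM
  have hlogpos : 0 < Real.log (1 + L / h₀) :=
    Real.log_pos (by have : 0 < L / h₀ := div_pos hL hh₀; linarith)
  have hlogM : Real.log (1 + L / h₀) ≤ M := by
    have := hmain.trans hM
    rcases ENNReal.ofReal_le_ofReal_iff'.1 this with h | h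
    · exact h
    · linarith
  have hexp : 1 + L / h₀ ≤ Real.exp M :=
    (Real.log_le_iff_le_exp (by positivity)).1 hlogM
  have hLle : L ≤ h₀ * Real.exp M := by
    have := mul_le_mul_of_nonneg_left hexp hh₀.le
    rw [mul_add, mul_one, mul_div_cancel₀ _ hh₀.ne'] at this
    linarith
  refine ⟨hLle, ?_⟩
  intro z hz
  rw [hΓ] at hz
  rcases hz with ⟨t, ht, rfl⟩
  rw [Metric.mem_closedBall]
  exact (hdist t ht).trans (ht.2.trans hLle)
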